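/- Let F = (f_{ij}) be an α×β matrix with strictly positive entries, and let p, q be stochastic vectors with positive entries. Define maps I_1(x)_i = 1/x_i on ℝ_+^α, I_2(y)_j = 1/y_j on ℝ_+^β, K_2(x)_j = Σ_i f_{ij} x_i p_i, K_1(y)_i = Σ_j f_{ij} y_j q_j, and T = K_1 ∘ I_2 ∘ K_2 ∘ I_1 : ℝ_+^α → ℝ_+^α. Then for all x, z ∈ ℝ_+^α, d(T(x), T(z)) ≤ (tanh(δ/4))² d(x, z), where δ = 2 log(max_{ij} f_{ij} / min_{ij} f_{ij}) and d is the Hilbert pseudo-metric d(x,z) = log((max_i x_i/z_i)/(min_i x_i/z_i)). -/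

import Mathlib

/-- The Hilbert pseudo-metric on the positive cone `ℝ₊^α`:
`d(x,z) = log(max_i x_i/z_i) − log(min_i x_i/z_i)`. -/
noncomputable def hilbertDist {α : ℕ} (x z : Fin α → ℝ) : ℝ :=
  Real.log (⨆ i, x i / z i) - Real.log (⨅ i, x i / z i)

lemma ineq4 (s v a b c d : ℝ) (hs : 1 ≤ s) (hv : 1 ≤ v)
    (ha : 0 ≤ a) (hb : 0 ≤ b) (hc : 0 ≤ c) (hd : 0 ≤ d)
    (hcon : a * d ≤ s^2 * (b * c)) :
    (v^2*a + c) * (b + d) * (v + s)^2 ≤ (s*v+1)^2 * ((v^2*b + d) * (a + c)) := by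
  obtain ⟨e, he, hea⟩ : ∃ e, 0 ≤ e ∧ e^2 = a := ⟨Real.sqrt a, Real.sqrt_nonneg a, Real.sq_sqrt ha⟩
  obtain ⟨f, hf, hfb⟩ : ∃ f, 0 ≤ f ∧ f^2 = b := ⟨Real.sqrt b, Real.sqrt_nonneg b, Real.sq_sqrt hb⟩
  obtain ⟨g, hg, hgc⟩ : ∃ g, 0 ≤ g ∧ g^2 = c := ⟨Real.sqrt c, Real.sqrt_nonneg c, Real.sq_sqrt hc⟩
  obtain ⟨h, hh, hhd⟩ : ∃ h, 0 ≤ h ∧ h^2 = d := ⟨Real.sqrt d, Real.sqrt_nonneg d, Real.sq_sqrt hd⟩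
  subst hea hfb hgc hhd
  have hs0 : (0:ℝ) ≤ s := by linarith
  have hsv : (0:ℝ) ≤ s * (f*g) := by positivity
  have hcon' : e * h ≤ s * (f * g) := by
    have h5 : (e*h)^2 ≤ (s*(f*g))^2 := by nlinarith [hcon]
    have h6 := Real.sqrt_le_sqrt h5
    rwa [Real.sqrt_sq (by positivity), Real.sqrt_sq hsv] at h6
  have hs1 : (0:ℝ) ≤ s^2 - 1 := by nlinarith
  have h1 : 0 ≤ (s^2 - 1) * (v*e*f - g*h)^2 := mul_nonneg hs1 (sq_nonneg _)
  have h2 : 0 ≤ (s*(f*g) - e*h) * ((v^2+2*s*v+1)*(e*h) + (s*v^2+2*v+s)*(f*g)) := by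
    apply mul_nonneg (by linarith)
    have h3 : (0:ℝ) ≤ e*h := by positivity
    have h4 : (0:ℝ) ≤ f*g := by positivity
    have c1 : (0:ℝ) ≤ v^2+2*s*v+1 := by nlinarith
    have c2 : (0:ℝ) ≤ s*v^2+2*v+s := by nlinarith
    exact add_nonneg (mul_nonneg c1 h3) (mul_nonneg c2 h4)
  nlinarith [mul_nonneg (by nlinarith : (0:ℝ) ≤ v^2 - 1) (add_nonneg h1 h2)]

lemma exists_ciSup_eq {n : ℕ} [NeZero n] (f : Fin n → ℝ) :
    ∃ i, (⨆ j, f j) = f i ∧ ∀ j, f j ≤ f i := by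
  obtain ⟨i, hi⟩ := Finite.exists_max f
  exact ⟨i, le_antisymm (ciSup_le hi) (le_ciSup (Set.finite_range f).bddAbove i), hi⟩
lemma exists_ciInf_eq {n : ℕ} [NeZero n] (f : Fin n → ℝ) :
    ∃ i, (⨅ j, f j) = f i ∧ ∀ j, f i ≤ f j := by
  obtain ⟨i, hi⟩ := Finite.exists_min f
  exact ⟨i, le_antisymm (ciInf_le (Set.finite_range f).bddBelow i) (le_ciInf hi), hi⟩


lemma exists_ciSup_eq' {n : Type*} [Finite n] [Nonempty n] (f : n → ℝ) :
    ∃ i, (⨆ j, f j) = f i ∧ ∀ j, f j ≤ f i := by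
  obtain ⟨i, hi⟩ := Finite.exists_max f
  exact ⟨i, le_antisymm (ciSup_le hi) (le_ciSup (Set.finite_range f).bddAbove i), hi⟩
lemma exists_ciInf_eq' {n : Type*} [Finite n] [Nonempty n] (f : n → ℝ) :
    ∃ i, (⨅ j, f j) = f i ∧ ∀ j, f i ≤ f j := by
  obtain ⟨i, hi⟩ := Finite.exists_min f
  exact ⟨i, le_antisymm (ciInf_le (Set.finite_range f).bddBelow i) (le_ciInf hi), hi⟩


lemma tanh_formula (s : ℝ) (hs : 0 < s) : Real.tanh (2 * Real.log s / 4) = (s-1)/(s+1) := by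
  have h : (2:ℝ) * Real.log s / 4 = Real.log s / 2 := by ring
  rw [h, Real.tanh_eq_sinh_div_cosh, Real.sinh_eq, Real.cosh_eq]
  have he : Real.exp (Real.log s / 2) ^ 2 = s := by
    rw [← Real.exp_nat_mul]
    push_cast
    rw [show (2:ℝ) * (Real.log s / 2) = Real.log s by ring, Real.exp_log hs]
  have hepos : 0 < Real.exp (Real.log s / 2) := Real.exp_pos _
  rw [Real.exp_neg]
  set E := Real.exp (Real.log s / 2)
  rw [← he]
  have hE2 : 0 < E^2 + 1 := by positivity
  field_simp


lemma log_ineq (s v : ℝ) (hs : 1 ≤ s) (hv : 1 ≤ v) :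
    Real.log ((s*v+1)/(v+s)) ≤ (s-1)/(s+1) * Real.log v := by
  set g : ℝ → ℝ := fun w => (s-1)/(s+1) * Real.log w - Real.log (s*w+1) + Real.log (w+s) with hg
  have hder : ∀ w : ℝ, 0 < w → HasDerivAt g ((s-1)/(s+1) * w⁻¹ - s/(s*w+1) + 1/(w+s)) w := by
    intro w hw
    have h1 : HasDerivAt (fun w : ℝ => s*w+1) s w := by
      simpa using ((hasDerivAt_id w).const_mul s).add_const 1
    have h2 : HasDerivAt (fun w : ℝ => w+s) 1 w := (hasDerivAt_id w).add_const s
    have hsw : s*w+1 ≠ 0 := by nlinarith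
    have hws : w+s ≠ 0 := by nlinarith
    have d1 := (Real.hasDerivAt_log (ne_of_gt hw)).const_mul ((s-1)/(s+1))
    have d2 := h1.log hsw
    have d3 := h2.log hws
    have := (d1.sub d2).add d3
    simp only [div_eq_mul_inv, one_div] at this ⊢
    exact this
  have hmono : MonotoneOn g (Set.Ici 1) := by
    apply monotoneOn_of_deriv_nonneg (convex_Ici 1)
    · intro w hw
      exact ((hder w (by simp at hw; linarith)).continuousAt).continuousWithinAt
    · intro w hw
      rw [interior_Ici] at hw
      exact ((hder w (by simp at hw; linarith)).differentiableAt).differentiableWithinAt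
    · intro w hw
      rw [interior_Ici] at hw
      simp only [Set.mem_Ioi] at hw
      have hw0 : (0:ℝ) < w := by linarith
      rw [(hder w hw0).deriv]
      have hsw : (0:ℝ) < s*w+1 := by nlinarith
      have hws : (0:ℝ) < w+s := by nlinarith
      have key : s/(s*w+1) - 1/(w+s) ≤ (s-1)/(s+1) * w⁻¹ := by
        rw [div_sub_div _ _ (ne_of_gt hsw) (ne_of_gt hws),
          show (s-1)/(s+1) * w⁻¹ = (s-1)/((s+1)*w) by rw [division_def, mul_assoc, ← mul_inv]; rfl,
          div_le_div_iff₀ (by positivity) (by positivity)]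
        nlinarith [sq_nonneg (w-1), mul_nonneg (sub_nonneg.2 hs) (sq_nonneg (w-1))]
      linarith
  have h01 := hmono (Set.mem_Ici.2 le_rfl) (Set.mem_Ici.2 hv) hv
  have hg1 : g 1 = 0 := by
    simp only [hg, Real.log_one, mul_one, mul_zero]
    ring
  have hlog : Real.log ((s*v+1)/(v+s)) = Real.log (s*v+1) - Real.log (v+s) :=
    Real.log_div (by nlinarith) (by nlinarith)
  simp only [hg] at h01 hg1
  rw [hg1] at h01
  rw [hlog]
  linarith

lemma key_rows {n : ℕ} (fj fk a t : Fin n → ℝ) (s v lam : ℝ)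
    (hs : 1 ≤ s) (hv : 1 ≤ v) (hlam : 0 < lam)
    (ha : ∀ i, 0 < a i) (hfj : ∀ i, 0 < fj i) (hfk : ∀ i, 0 < fk i)
    (hr1 : ∀ i, fj i ≤ s * fk i) (hr2 : ∀ i, fk i ≤ s * fj i)
    (ht1 : ∀ i, lam ≤ t i) (ht2 : ∀ i, t i ≤ v^2 * lam) :
    (∑ i, fj i * a i * t i) * (∑ i, fk i * a i) * (v+s)^2 ≤
      (s*v+1)^2 * ((∑ i, fk i * a i * t i) * (∑ i, fj i * a i)) := by
  obtain ⟨Gj, hGj⟩ : ∃ r, r = ∑ i, fj i * a i := ⟨_, rfl⟩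
  obtain ⟨Gk, hGk⟩ : ∃ r, r = ∑ i, fk i * a i := ⟨_, rfl⟩
  rw [← hGj, ← hGk]
  obtain ⟨c, hc⟩ : ∃ c : Fin n → ℝ, c = fun i => fj i * Gk * (v+s)^2 - (s*v+1)^2 * (fk i * Gj) :=
    ⟨_, rfl⟩
  have hci : ∀ i, c i = fj i * Gk * (v+s)^2 - (s*v+1)^2 * (fk i * Gj) := fun i => by rw [hc]
  have hsum : ∀ u : Fin n → ℝ, ∀ W : Finset (Fin n), (∑ i ∈ W, a i * u i * c i) =
      (∑ i ∈ W, fj i * a i * u i) * Gk * (v+s)^2 - (s*v+1)^2 * ((∑ i ∈ W, fk i * a i * u i) * Gj) := by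
    intro u W
    rw [Finset.sum_congr rfl (fun i (_ : i ∈ W) => show a i * u i * c i =
        (fj i * a i * u i) * (Gk * (v+s)^2) - (fk i * a i * u i) * ((s*v+1)^2 * Gj) by
          rw [hci]; ring),
      Finset.sum_sub_distrib, ← Finset.sum_mul, ← Finset.sum_mul]
    ring
  set S := Finset.univ.filter (fun i => 0 ≤ c i) with hS
  set S' := Finset.univ.filter (fun i => ¬ (0 ≤ c i)) with hS'
  have split : ∀ g : Fin n → ℝ, (∑ i, g i) = (∑ i ∈ S, g i) + ∑ i ∈ S', g i :=
    fun g => (Finset.sum_filter_add_sum_filter_not Finset.univ _ g).symm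
  -- step A
  have stepA : (∑ i, a i * t i * c i) ≤
      (∑ i ∈ S, a i * (v^2*lam) * c i) + ∑ i ∈ S', a i * lam * c i := by
    rw [split (fun i => a i * t i * c i)]
    apply add_le_add
    · apply Finset.sum_le_sum
      intro i hi
      rw [hS, Finset.mem_filter] at hi
      have h1 : t i * c i ≤ (v^2*lam) * c i := mul_le_mul_of_nonneg_right (ht2 i) hi.2
      calc a i * t i * c i = a i * (t i * c i) := by ring
        _ ≤ a i * ((v^2*lam) * c i) := mul_le_mul_of_nonneg_left h1 (ha i).le
        _ = a i * (v^2*lam) * c i := by ring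
    · apply Finset.sum_le_sum
      intro i hi
      rw [hS', Finset.mem_filter] at hi
      have hneg : c i ≤ 0 := by push_neg at hi; exact (hi.2).le
      have h1 : t i * c i ≤ lam * c i := mul_le_mul_of_nonpos_right (ht1 i) hneg
      calc a i * t i * c i = a i * (t i * c i) := by ring
        _ ≤ a i * (lam * c i) := mul_le_mul_of_nonneg_left h1 (ha i).le
        _ = a i * lam * c i := by ring
  -- step B
  obtain ⟨Pj, hPj⟩ : ∃ r, r = ∑ i ∈ S, fj i * a i := ⟨_, rfl⟩
  obtain ⟨Qj, hQj⟩ : ∃ r, r = ∑ i ∈ S', fj i * a i := ⟨_, rfl⟩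
  obtain ⟨Pk, hPk⟩ : ∃ r, r = ∑ i ∈ S, fk i * a i := ⟨_, rfl⟩
  obtain ⟨Qk, hQk⟩ : ∃ r, r = ∑ i ∈ S', fk i * a i := ⟨_, rfl⟩
  have hGj' : Gj = Pj + Qj := by rw [hGj, hPj, hQj, split]
  have hGk' : Gk = Pk + Qk := by rw [hGk, hPk, hQk, split]
  have eS : (∑ i ∈ S, a i * (v^2*lam) * c i) = (v^2*lam) * (Pj * Gk * (v+s)^2 - (s*v+1)^2 * (Pk * Gj)) := by
    have := hsum (fun _ => v^2*lam) S
    rw [Finset.sum_congr rfl (fun i (_ : i ∈ S) => show a i * (v^2*lam) * c i = a i * (fun _ : Fin n => v^2*lam) i * c i from rfl), this]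
    rw [hPj, hPk, ← Finset.sum_mul, ← Finset.sum_mul]
    ring_nf
  have eS' : (∑ i ∈ S', a i * lam * c i) = lam * (Qj * Gk * (v+s)^2 - (s*v+1)^2 * (Qk * Gj)) := by
    have := hsum (fun _ => lam) S'
    rw [Finset.sum_congr rfl (fun i (_ : i ∈ S') => show a i * lam * c i = a i * (fun _ : Fin n => lam) i * c i from rfl), this]
    rw [hQj, hQk, ← Finset.sum_mul, ← Finset.sum_mul]
    ring_nf
  -- nonnegativity and ratio facts
  have hPjn : 0 ≤ Pj := hPj ▸ Finset.sum_nonneg fun i _ => mul_nonneg (hfj i).le (ha i).le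
  have hQjn : 0 ≤ Qj := hQj ▸ Finset.sum_nonneg fun i _ => mul_nonneg (hfj i).le (ha i).le
  have hPkn : 0 ≤ Pk := hPk ▸ Finset.sum_nonneg fun i _ => mul_nonneg (hfk i).le (ha i).le
  have hQkn : 0 ≤ Qk := hQk ▸ Finset.sum_nonneg fun i _ => mul_nonneg (hfk i).le (ha i).le
  have hPjk : Pj ≤ s * Pk := by
    rw [hPj, hPk, Finset.mul_sum]
    exact Finset.sum_le_sum fun i _ => by nlinarith [mul_le_mul_of_nonneg_right (hr1 i) (ha i).le]
  have hQkj : Qk ≤ s * Qj := by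
    rw [hQk, hQj, Finset.mul_sum]
    exact Finset.sum_le_sum fun i _ => by nlinarith [mul_le_mul_of_nonneg_right (hr2 i) (ha i).le]
  have hcon : Pj * Qk ≤ s^2 * (Pk * Qj) := by
    have hsPk : 0 ≤ s * Pk := mul_nonneg (by linarith) hPkn
    nlinarith [mul_le_mul hPjk hQkj hQkn hsPk]
  have h4 := ineq4 s v Pj Pk Qj Qk hs hv hPjn hPkn hQjn hQkn hcon
  have stepB : (∑ i ∈ S, a i * (v^2*lam) * c i) + (∑ i ∈ S', a i * lam * c i) ≤ 0 := by
    rw [eS, eS', hGj', hGk']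
    nlinarith [mul_le_mul_of_nonneg_left h4 hlam.le]
  have final := le_trans stepA stepB
  rw [hsum t Finset.univ] at final
  linarith

lemma step_contract {a b : ℕ} [NeZero a] [NeZero b]
    (G : Fin a → Fin b → ℝ) (w : Fin a → ℝ) (s : ℝ)
    (hG : ∀ i j, 0 < G i j) (hw : ∀ i, 0 < w i) (hs : 1 ≤ s)
    (hGs : ∀ i j i' j', G i j ≤ s * G i' j')
    (x z : Fin a → ℝ) (hx : ∀ i, 0 < x i) (hz : ∀ i, 0 < z i) :
    hilbertDist (fun j => ∑ i, G i j * (1/x i) * w i) (fun j => ∑ i, G i j * (1/z i) * w i)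
      ≤ (s-1)/(s+1) * hilbertDist x z := by
  obtain ⟨iM, hM1, hM2⟩ := exists_ciSup_eq (fun i => x i / z i)
  obtain ⟨im, hm1, hm2⟩ := exists_ciInf_eq (fun i => x i / z i)
  set Λ : ℝ := x iM / z iM with hΛ
  set μ : ℝ := x im / z im with hμ
  have hμ0 : 0 < μ := div_pos (hx im) (hz im)
  have hΛ0 : 0 < Λ := div_pos (hx iM) (hz iM)
  have hμΛ : μ ≤ Λ := hm2 iM
  set v : ℝ := Real.sqrt (Λ/μ) with hvdef
  have hv2 : v^2 = Λ/μ := Real.sq_sqrt (by positivity)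
  have hv : 1 ≤ v := by
    rw [show (1:ℝ) = Real.sqrt 1 by simp [Real.sqrt_one]]
    exact Real.sqrt_le_sqrt ((one_le_div hμ0).2 hμΛ)
  have hdxz : hilbertDist x z = 2 * Real.log v := by
    rw [hilbertDist, hM1, hm1, ← Real.log_div (ne_of_gt hΛ0) (ne_of_gt hμ0),
      ← hv2, Real.log_pow]
    push_cast; ring
  -- apply key_rows for all pairs j k
  set Y : Fin b → ℝ := fun j => ∑ i, G i j * (1/x i) * w i with hY
  set Z : Fin b → ℝ := fun j => ∑ i, G i j * (1/z i) * w i with hZ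
  have hYpos : ∀ j, 0 < Y j := fun j => Finset.sum_pos
    (fun i _ => by have := hG i j; have := hx i; have := hw i; positivity) Finset.univ_nonempty
  have hZpos : ∀ j, 0 < Z j := fun j => Finset.sum_pos
    (fun i _ => by have := hG i j; have := hz i; have := hw i; positivity) Finset.univ_nonempty
  have hkey : ∀ j k, Y j * Z k * (v+s)^2 ≤ (s*v+1)^2 * (Y k * Z j) := by
    intro j k
    have := key_rows (fun i => G i j) (fun i => G i k) (fun i => (1/z i) * w i)
      (fun i => z i / x i) s v Λ⁻¹ hs hv (by positivity)
      (fun i => by have := hz i; have := hw i; positivity)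
      (fun i => hG i j) (fun i => hG i k)
      (fun i => hGs i j i k) (fun i => hGs i k i j)
      (fun i => by
        have h0 := hM2 i
        rw [div_le_iff₀ (hz i)] at h0
        rw [le_div_iff₀ (hx i), inv_mul_le_iff₀ hΛ0]
        linarith)
      (fun i => by
        have h1 : v^2 * Λ⁻¹ = μ⁻¹ := by rw [hv2]; field_simp
        have h0 := hm2 i
        rw [le_div_iff₀ (hz i)] at h0
        rw [h1, div_le_iff₀ (hx i)]
        have h2 := mul_le_mul_of_nonneg_left h0 (inv_pos.2 hμ0).le
        rwa [inv_mul_cancel_left₀ (ne_of_gt hμ0)] at h2)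
    have eY : ∀ j', Y j' = ∑ i, G i j' * ((1/z i) * w i) * (z i / x i) := by
      intro j'
      apply Finset.sum_congr rfl
      intro i _
      have hzi := (hz i).ne'
      have hxi := (hx i).ne'
      field_simp
    have eZ : ∀ j', Z j' = ∑ i, G i j' * ((1/z i) * w i) := by
      intro j'
      apply Finset.sum_congr rfl
      intro i _
      ring
    rw [eY j, eY k, eZ j, eZ k]
    exact this
  -- conclude with logs
  obtain ⟨jM, hYM1, hYM2⟩ := exists_ciSup_eq (fun j => Y j / Z j)
  obtain ⟨jm, hYm1, hYm2⟩ := exists_ciInf_eq (fun j => Y j / Z j)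
  have hvs : (0:ℝ) < v + s := by linarith
  have hsv1 : (0:ℝ) < s*v + 1 := by nlinarith
  have hratio : (Y jM / Z jM) / (Y jm / Z jm) ≤ ((s*v+1)/(v+s))^2 := by
    have hq : (Y jM / Z jM) / (Y jm / Z jm) = (Y jM * Z jm)/(Y jm * Z jM) := by
      field_simp [(hYpos jM).ne', (hYpos jm).ne', (hZpos jM).ne', (hZpos jm).ne']
    rw [hq, div_pow, div_le_div_iff₀ (mul_pos (hYpos jm) (hZpos jM)) (pow_pos hvs 2)]
    nlinarith [hkey jM jm]
  have hdY : hilbertDist Y Z ≤ (s-1)/(s+1) * (2 * Real.log v) := by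
    have hrm : 0 < Y jm / Z jm := div_pos (hYpos jm) (hZpos jm)
    have hrM : 0 < Y jM / Z jM := div_pos (hYpos jM) (hZpos jM)
    rw [hilbertDist, hYM1, hYm1, ← Real.log_div (ne_of_gt hrM) (ne_of_gt hrm)]
    calc Real.log ((Y jM / Z jM) / (Y jm / Z jm)) ≤ Real.log (((s*v+1)/(v+s))^2) :=
          Real.log_le_log (by positivity) hratio
      _ = 2 * Real.log ((s*v+1)/(v+s)) := by rw [Real.log_pow]; push_cast; ring
      _ ≤ 2 * ((s-1)/(s+1) * Real.log v) := by linarith [log_ineq s v hs hv]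
      _ = (s-1)/(s+1) * (2 * Real.log v) := by ring
  rw [hdxz]
  exact hdY

/-- The Birkhoff contraction estimate: `T = K₁ ∘ I₂ ∘ K₂ ∘ I₁` contracts the Hilbert
pseudo-metric by at least the factor `tanh(δ/4)²`, where
`δ = 2 log(max f_{ij} / min f_{ij})`. -/
theorem birkhoff_contraction {α β : ℕ} [NeZero α] [NeZero β]
    (F : Fin α → Fin β → ℝ) (hF : ∀ i j, 0 < F i j)
    (p : Fin α → ℝ) (hp : ∀ i, 0 < p i) (hp1 : ∑ i, p i = 1)
    (q : Fin β → ℝ) (hq : ∀ j, 0 < q j) (hq1 : ∑ j, q j = 1)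
    (I₁ : (Fin α → ℝ) → (Fin α → ℝ)) (hI₁ : ∀ x i, I₁ x i = 1 / x i)
    (K₂ : (Fin α → ℝ) → (Fin β → ℝ)) (hK₂ : ∀ x j, K₂ x j = ∑ i, F i j * x i * p i)
    (I₂ : (Fin β → ℝ) → (Fin β → ℝ)) (hI₂ : ∀ y j, I₂ y j = 1 / y j)
    (K₁ : (Fin β → ℝ) → (Fin α → ℝ)) (hK₁ : ∀ y i, K₁ y i = ∑ j, F i j * y j * q j)
    (T : (Fin α → ℝ) → (Fin α → ℝ)) (hT : T = K₁ ∘ I₂ ∘ K₂ ∘ I₁)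
    (δ : ℝ)
    (hδ : δ = 2 * Real.log ((⨆ ij : Fin α × Fin β, F ij.1 ij.2) /
                            (⨅ ij : Fin α × Fin β, F ij.1 ij.2))) :
    ∀ x z : Fin α → ℝ, (∀ i, 0 < x i) → (∀ i, 0 < z i) →
      hilbertDist (T x) (T z) ≤ (Real.tanh (δ / 4)) ^ 2 * hilbertDist x z := by
  intro x z hx hz
  obtain ⟨⟨iM, jM⟩, hM1, hM2⟩ := exists_ciSup_eq' (fun ij : Fin α × Fin β => F ij.1 ij.2)
  obtain ⟨⟨im, jm⟩, hm1, hm2⟩ := exists_ciInf_eq' (fun ij : Fin α × Fin β => F ij.1 ij.2)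
  set M : ℝ := F iM jM with hM
  set m : ℝ := F im jm with hm
  have hm0 : 0 < m := hF im jm
  have hM0 : 0 < M := hF iM jM
  have hmM : m ≤ M := hm2 (iM, jM)
  set s : ℝ := M / m with hsdef
  have hs : 1 ≤ s := (one_le_div hm0).2 hmM
  have hθ : Real.tanh (δ / 4) = (s-1)/(s+1) := by
    rw [hδ, hM1, hm1]
    exact tanh_formula s (by positivity)
  have hθ0 : 0 ≤ (s-1)/(s+1) := div_nonneg (by linarith) (by linarith)
  have hGs : ∀ i j i' j', F i j ≤ s * F i' j' := by
    intro i j i' j'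
    have h1 : F i j ≤ M := hM2 (i, j)
    have h2 : m ≤ F i' j' := hm2 (i', j')
    calc F i j ≤ M := h1
      _ = s * m := by rw [hsdef, div_mul_cancel₀ _ hm0.ne']
      _ ≤ s * F i' j' := by nlinarith
  -- first step
  set Y : Fin β → ℝ := fun j => ∑ i, F i j * (1/x i) * p i with hY
  set Z : Fin β → ℝ := fun j => ∑ i, F i j * (1/z i) * p i with hZ
  have hYpos : ∀ j, 0 < Y j := fun j => Finset.sum_pos
    (fun i _ => by have := hF i j; have := hx i; have := hp i; positivity) Finset.univ_nonempty
  have hZpos : ∀ j, 0 < Z j := fun j => Finset.sum_pos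
    (fun i _ => by have := hF i j; have := hz i; have := hp i; positivity) Finset.univ_nonempty
  have step1 : hilbertDist Y Z ≤ (s-1)/(s+1) * hilbertDist x z :=
    step_contract F p s hF hp hs hGs x z hx hz
  -- second step
  have step2 : hilbertDist (fun i => ∑ j, F i j * (1/Y j) * q j)
      (fun i => ∑ j, F i j * (1/Z j) * q j) ≤ (s-1)/(s+1) * hilbertDist Y Z :=
    step_contract (fun j i => F i j) q s (fun j i => hF i j) hq hs
      (fun j i j' i' => hGs i j i' j') Y Z hYpos hZpos
  -- assemble
  have hYe : ∀ j, K₂ (I₁ x) j = Y j := by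
    intro j
    rw [hK₂]
    simp only [hY]
    exact Finset.sum_congr rfl fun i _ => by rw [hI₁]
  have hZe : ∀ j, K₂ (I₁ z) j = Z j := by
    intro j
    rw [hK₂]
    simp only [hZ]
    exact Finset.sum_congr rfl fun i _ => by rw [hI₁]
  have hTx : T x = fun i => ∑ j, F i j * (1/Y j) * q j := by
    funext i
    rw [hT]
    simp only [Function.comp_apply, hK₁]
    exact Finset.sum_congr rfl fun j _ => by rw [hI₂, hYe j]
  have hTz : T z = fun i => ∑ j, F i j * (1/Z j) * q j := by
    funext i
    rw [hT]
    simp only [Function.comp_apply, hK₁]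
    exact Finset.sum_congr rfl fun j _ => by rw [hI₂, hZe j]
  rw [hTx, hTz, hθ]
  calc hilbertDist (fun i => ∑ j, F i j * (1/Y j) * q j) (fun i => ∑ j, F i j * (1/Z j) * q j)
      ≤ (s-1)/(s+1) * hilbertDist Y Z := step2
    _ ≤ (s-1)/(s+1) * ((s-1)/(s+1) * hilbertDist x z) := mul_le_mul_of_nonneg_left step1 hθ0
    _ = ((s-1)/(s+1))^2 * hilbertDist x z := by ring
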